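/- In the Cartesian product P_n □ H of a path with a connected graph H with τ₃(H) = ℓ, if three vertices x, y, z all lie in the same copy H(u_i) of H, then there exist at least ℓ + 1 pairwise internally disjoint pendant {x,y,z}-Steiner trees in P_n □ H, provided n ≥ 2. -/

import Mathlib

open SimpleGraph

/-- `T` is a pendant `S`-Steiner tree in `G`: a subtree of `G` containing `S` in which
every vertex of `S` has degree exactly one. -/
def IsPendantSteinerTree {V : Type*} (G : SimpleGraph V) (S : Set V) (T : G.Subgraph) : Prop :=
  T.coe.IsTree ∧ S ⊆ T.verts ∧ ∀ v ∈ S, (T.neighborSet v).ncard = 1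

/-- Two (pendant) `S`-Steiner trees are internally disjoint: edge-disjoint with
vertex intersection exactly `S`. -/
def InternallyDisjoint {V : Type*} (G : SimpleGraph V) (S : Set V) (T T' : G.Subgraph) : Prop :=
  T.edgeSet ∩ T'.edgeSet = ∅ ∧ T.verts ∩ T'.verts = S

/-- There exist `ℓ` pairwise internally disjoint pendant `S`-Steiner trees in `G`. -/
def HasPendantTrees {V : Type*} (G : SimpleGraph V) (S : Set V) (ℓ : ℕ) : Prop :=
  ∃ T : Fin ℓ → G.Subgraph, (∀ i, IsPendantSteinerTree G S (T i)) ∧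
    ∀ i j, i ≠ j → InternallyDisjoint G S (T i) (T j)

/-- The pendant tree `k`-connectivity `τ_k(G)`: the largest `ℓ` such that every `k`-set of
vertices admits `ℓ` pairwise internally disjoint pendant Steiner trees. -/
noncomputable def pendantConn {V : Type*} (G : SimpleGraph V) (k : ℕ) : ℕ :=
  sSup {ℓ | ∀ S : Finset V, S.card = k → HasPendantTrees G (↑S) ℓ}

/-- The minimum degree of a graph, via neighbour sets. -/
noncomputable def minDeg {V : Type*} (G : SimpleGraph V) : ℕ :=
  sInf (Set.range fun v => (G.neighborSet v).ncard)

/-- `G` is `k`-connected. -/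
def IsKConnected {V : Type*} [Fintype V] (G : SimpleGraph V) (k : ℕ) : Prop :=
  k < Fintype.card V ∧
    ∀ U : Finset V, U.card < k → (G.induce ((↑U : Set V)ᶜ)).Connected

/-- The vertex connectivity `κ(G)`. -/
noncomputable def vertexConn {V : Type*} [Fintype V] (G : SimpleGraph V) : ℕ :=
  sSup {k | IsKConnected G k}

section Aux
variable {α β : Type*}

lemma myIsTree_of_iso {G : SimpleGraph α} {G' : SimpleGraph β} (e : G ≃g G') (h : G.IsTree) :
    G'.IsTree := by
  refine ⟨e.connected_iff.mp h.1, ?_⟩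
  intro v c hc
  exact h.2 (c.map e.symm.toHom)
    ((Walk.map_isCycle_iff_of_injective e.symm.toEquiv.injective).mpr hc)

lemma myConnected_sdiff {G : SimpleGraph α} (hG : G.Connected) {x y : α}
    (hr : (G \ fromEdgeSet {s(x, y)}).Reachable x y) :
    (G \ fromEdgeSet {s(x, y)}).Connected := by
  rw [connected_iff]
  refine ⟨fun p q => ?_, hG.nonempty⟩
  obtain ⟨w⟩ := hG p q
  induction w with
  | nil => exact Reachable.refl _
  | @cons a b d h w ih =>
    refine Reachable.trans ?_ ih
    by_cases he : s(a, b) = s(x, y)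
    · rw [Sym2.eq_iff] at he
      rcases he with ⟨rfl, rfl⟩ | ⟨rfl, rfl⟩
      · exact hr
      · exact hr.symm
    · exact Adj.reachable ⟨h, fun hc => he (by simpa using hc.1)⟩

lemma myExists_spanning_tree [Finite α] (G : SimpleGraph α) (h : G.Connected) :
    ∃ T, T ≤ G ∧ T.IsTree := by
  classical
  set P : Set ℕ := {m | ∃ T, T ≤ G ∧ T.Connected ∧ T.edgeSet.ncard = m} with hP
  have hne : G.edgeSet.ncard ∈ P := ⟨G, le_rfl, h, rfl⟩
  obtain ⟨T, hle, hconn, hcard⟩ : ∃ T, T ≤ G ∧ T.Connected ∧ T.edgeSet.ncard = sInf P :=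
    Nat.sInf_mem (Set.nonempty_of_mem hne)
  refine ⟨T, hle, hconn, ?_⟩
  intro v c hc
  obtain ⟨x, y, hadj, hmem⟩ : ∃ x y, T.Adj x y ∧ s(x, y) ∈ c.edges := by
    cases c with
    | nil => exact absurd rfl hc.ne_nil
    | cons hadj w => exact ⟨_, _, hadj, by simp⟩
  have hreach : (T \ fromEdgeSet {s(x, y)}).Reachable x y :=
    (adj_and_reachable_delete_edges_iff_exists_cycle.mpr ⟨v, c, hc, hmem⟩).2
  have hconn' := myConnected_sdiff hconn hreach
  have hes : (T \ fromEdgeSet {s(x, y)}).edgeSet = T.edgeSet \ {s(x, y)} := by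
    rw [edgeSet_sdiff, edgeSet_fromEdgeSet, edgeSet_sdiff_sdiff_isDiag]
  have hlt : (T \ fromEdgeSet {s(x, y)}).edgeSet.ncard < T.edgeSet.ncard := by
    rw [hes]
    exact Set.ncard_diff_singleton_lt_of_mem hadj (Set.toFinite _)
  have : sInf P ≤ (T \ fromEdgeSet {s(x, y)}).edgeSet.ncard :=
    Nat.sInf_le ⟨_, le_trans sdiff_le hle, hconn', rfl⟩
  omega

lemma myExists_adj_of_reachable_ne {G : SimpleGraph α} {x y : α} (h : G.Reachable x y)
    (hxy : x ≠ y) : ∃ z, G.Adj x z := by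
  obtain ⟨w⟩ := h
  cases w with
  | nil => exact absurd rfl hxy
  | cons h' _ => exact ⟨_, h'⟩

variable {G : SimpleGraph α} {G' : SimpleGraph β}

noncomputable def myCoe_map_iso (f : G →g G') (hf : Function.Injective f) (T : G.Subgraph) :
    T.coe ≃g (T.map f).coe := by
  refine ⟨Equiv.Set.image f T.verts hf, ?_⟩
  rintro ⟨p, hp⟩ ⟨q, hq⟩
  constructor
  · rintro ⟨p', q', h', hp', hq'⟩
    have hpp : p' = p := hf hp'
    have hqq : q' = q := hf hq'
    subst hpp; subst hqq
    exact h'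
  · intro h
    exact ⟨p, q, h, rfl, rfl⟩

lemma myMap_neighborSet (f : G →g G') (hf : Function.Injective f) (T : G.Subgraph) (v : α) :
    (T.map f).neighborSet (f v) = f '' T.neighborSet v := by
  ext w
  constructor
  · rintro ⟨p, q, h, hp, rfl⟩
    exact ⟨q, by rwa [← hf hp], rfl⟩
  · rintro ⟨q, h, rfl⟩
    exact ⟨v, q, h, rfl, rfl⟩

/-- Turn a spanning subgraph of `K.coe` into a `G.Subgraph` below `K` with the same verts. -/
def restrictSub (K : G.Subgraph) (T' : SimpleGraph K.verts) (h : T' ≤ K.coe) : G.Subgraph where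
  verts := K.verts
  Adj p q := ∃ (hp : p ∈ K.verts) (hq : q ∈ K.verts), T'.Adj ⟨p, hp⟩ ⟨q, hq⟩
  adj_sub := by
    rintro p q ⟨hp, hq, hadj⟩
    exact K.adj_sub (h hadj)
  edge_vert := by
    rintro p q ⟨hp, hq, _⟩
    exact hp
  symm := by
    constructor
    rintro p q ⟨hp, hq, h'⟩
    exact ⟨hq, hp, h'.symm⟩

lemma restrictSub_le (K : G.Subgraph) (T' : SimpleGraph K.verts) (h : T' ≤ K.coe) :
    restrictSub K T' h ≤ K := by
  refine ⟨le_refl _, ?_⟩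
  rintro p q ⟨hp, hq, hadj⟩
  exact h hadj

def restrictSub_coe_iso (K : G.Subgraph) (T' : SimpleGraph K.verts) (h : T' ≤ K.coe) :
    T' ≃g (restrictSub K T' h).coe := by
  refine ⟨Equiv.refl _, ?_⟩
  rintro ⟨p, hp⟩ ⟨q, hq⟩
  constructor
  · rintro ⟨hp', hq', hadj⟩
    exact hadj
  · intro hadj
    exact ⟨hp, hq, hadj⟩

end Aux

section LayerK

variable {V : Type*} (H : SimpleGraph V) {n : ℕ} (u u' : Fin n)
  (huu' : (pathGraph n).Adj u u') (a b c : V)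

/-- The extra subgraph: a full copy of `H` in layer `u'`, together with the three
vertices `(u,a), (u,b), (u,c)` joined vertically to layer `u'`. -/
def layerK : (pathGraph n □ H).Subgraph where
  verts := {(u, a), (u, b), (u, c)} ∪ {p | p.1 = u'}
  Adj p q :=
    (p.1 = u ∧ q.1 = u' ∧ p.2 = q.2 ∧ (p.2 = a ∨ p.2 = b ∨ p.2 = c)) ∨
    (q.1 = u ∧ p.1 = u' ∧ p.2 = q.2 ∧ (p.2 = a ∨ p.2 = b ∨ p.2 = c)) ∨
    (p.1 = u' ∧ q.1 = u' ∧ H.Adj p.2 q.2)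
  adj_sub := by
    rintro ⟨p1, p2⟩ ⟨q1, q2⟩ (⟨rfl, rfl, rfl, _⟩ | ⟨rfl, rfl, rfl, _⟩ | ⟨rfl, rfl, h'⟩)
    · exact boxProd_adj.mpr (Or.inl ⟨huu', rfl⟩)
    · exact boxProd_adj.mpr (Or.inl ⟨huu'.symm, rfl⟩)
    · exact boxProd_adj.mpr (Or.inr ⟨h', rfl⟩)
  edge_vert := by
    rintro ⟨p1, p2⟩ ⟨q1, q2⟩ (⟨rfl, rfl, rfl, hx⟩ | ⟨rfl, rfl, rfl, hx⟩ | ⟨rfl, rfl, h'⟩)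
    · rcases hx with rfl | rfl | rfl
      · exact Or.inl (by simp)
      · exact Or.inl (by simp)
      · exact Or.inl (by simp)
    · exact Or.inr rfl
    · exact Or.inr rfl
  symm := by
    constructor
    rintro ⟨p1, p2⟩ ⟨q1, q2⟩ (⟨hp, hq, hpq, hx⟩ | ⟨hq, hp, hpq, hx⟩ | ⟨hp, hq, h'⟩)
    · exact Or.inr (Or.inl ⟨hp, hq, hpq.symm, hpq ▸ hx⟩)
    · exact Or.inl ⟨hq, hp, hpq.symm, hpq ▸ hx⟩
    · exact Or.inr (Or.inr ⟨hq, hp, h'.symm⟩)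

lemma layerK_mem_right (x : V) : ((u', x) : Fin n × V) ∈ (layerK H u u' huu' a b c).verts :=
  Or.inr rfl

lemma layerK_mem_left {x : V} (hx : x = a ∨ x = b ∨ x = c) :
    ((u, x) : Fin n × V) ∈ (layerK H u u' huu' a b c).verts := by
  rcases hx with rfl | rfl | rfl
  · exact Or.inl (by simp)
  · exact Or.inl (by simp)
  · exact Or.inl (by simp)

lemma layerK_coe_connected (hH : H.Connected) :
    (layerK H u u' huu' a b c).coe.Connected := by
  set K := layerK H u u' huu' a b c with hK
  have hlay : ∀ x y : V,
      K.coe.Reachable ⟨(u', x), layerK_mem_right H u u' huu' a b c x⟩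
        ⟨(u', y), layerK_mem_right H u u' huu' a b c y⟩ := by
    intro x y
    obtain ⟨w⟩ := hH x y
    induction w with
    | nil => exact Reachable.refl _
    | @cons p q r h w ih =>
      refine Reachable.trans (Adj.reachable ?_) ih
      exact show K.Adj (u', p) (u', q) from Or.inr (Or.inr ⟨rfl, rfl, h⟩)
  have hvert : ∀ (x : V) (hx : x = a ∨ x = b ∨ x = c),
      K.coe.Adj ⟨(u, x), layerK_mem_left H u u' huu' a b c hx⟩
        ⟨(u', x), layerK_mem_right H u u' huu' a b c x⟩ := by
    intro x hx
    exact show K.Adj (u, x) (u', x) from Or.inl ⟨rfl, rfl, rfl, hx⟩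
  rw [connected_iff_exists_forall_reachable]
  refine ⟨⟨(u', a), layerK_mem_right H u u' huu' a b c a⟩, ?_⟩
  rintro ⟨⟨p1, p2⟩, hp⟩
  rcases hp with hp | hp
  · simp only [Set.mem_insert_iff, Set.mem_singleton_iff, Prod.mk.injEq] at hp
    rcases hp with ⟨rfl, h2⟩ | ⟨rfl, h2⟩ | ⟨rfl, h2⟩
    · exact (hlay a p2).trans ((hvert p2 (Or.inl h2)).reachable).symm
    · exact (hlay a p2).trans ((hvert p2 (Or.inr (Or.inl h2))).reachable).symm
    · exact (hlay a p2).trans ((hvert p2 (Or.inr (Or.inr h2))).reachable).symm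
  · have : p1 = u' := hp
    subst this
    exact hlay a p2

lemma layerK_adj_iff {p q : Fin n × V} :
    (layerK H u u' huu' a b c).Adj p q ↔
      (p.1 = u ∧ q.1 = u' ∧ p.2 = q.2 ∧ (p.2 = a ∨ p.2 = b ∨ p.2 = c)) ∨
      (q.1 = u ∧ p.1 = u' ∧ p.2 = q.2 ∧ (p.2 = a ∨ p.2 = b ∨ p.2 = c)) ∨
      (p.1 = u' ∧ q.1 = u' ∧ H.Adj p.2 q.2) := Iff.rfl

end LayerK

theorem stmt6 {V : Type*} [Fintype V] (H : SimpleGraph V) (hH : H.Connected) (n ℓ : ℕ)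
    (hn : 2 ≤ n)
    (hτ : ∀ S : Finset V, S.card = 3 → HasPendantTrees H (↑S) ℓ)
    (u : Fin n) (a b c : V) (hab : a ≠ b) (hac : a ≠ c) (hbc : b ≠ c) :
    HasPendantTrees (pathGraph n □ H) {(u, a), (u, b), (u, c)} (ℓ + 1) := by
  classical
  obtain ⟨u', huu'⟩ : ∃ u', (pathGraph n).Adj u u' := by
    rcases lt_or_ge (u.val + 1) n with h | h
    · exact ⟨⟨u.val + 1, h⟩, pathGraph_adj.mpr (Or.inl rfl)⟩
    · have h1 := u.isLt
      exact ⟨⟨u.val - 1, by omega⟩,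
        pathGraph_adj.mpr (Or.inr (by show u.val - 1 + 1 = u.val; omega))⟩
  have hune : u ≠ u' := huu'.ne
  obtain ⟨T₀, hpend, hdis⟩ := hτ {a, b, c} (Finset.card_eq_three.mpr ⟨a, b, c, hab, hac, hbc, rfl⟩)
  have hSset : (↑({a, b, c} : Finset V) : Set V) = {a, b, c} := by simp
  rw [hSset] at hpend hdis
  set S : Set (Fin n × V) := {(u, a), (u, b), (u, c)} with hSdef
  set K := layerK H u u' huu' a b c with hKdef
  obtain ⟨T', hT'le, hT'tree⟩ :=
    myExists_spanning_tree K.coe (layerK_coe_connected H u u' huu' a b c hH)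
  set Tex := restrictSub K T' hT'le with hTexdef
  have hTexle : Tex ≤ K := restrictSub_le _ _ _
  have hTextree : Tex.coe.IsTree := myIsTree_of_iso (restrictSub_coe_iso K T' hT'le) hT'tree
  have hSmem' : ∀ p : Fin n × V, p ∈ S → ∃ x, (x = a ∨ x = b ∨ x = c) ∧ p = (u, x) := by
    intro p hp
    rw [hSdef] at hp
    simp only [Set.mem_insert_iff, Set.mem_singleton_iff] at hp
    rcases hp with h | h | h
    · exact ⟨a, Or.inl rfl, h⟩
    · exact ⟨b, Or.inr (Or.inl rfl), h⟩
    · exact ⟨c, Or.inr (Or.inr rfl), h⟩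
  let f : H →g pathGraph n □ H := ⟨fun v => (u, v), fun h => boxProd_adj.mpr (Or.inr ⟨h, rfl⟩)⟩
  have hf : Function.Injective f := fun x y hxy => congrArg Prod.snd hxy
  have hfa : ∀ x : V, f x = (u, x) := fun _ => rfl
  have hSimage : f '' ({a, b, c} : Set V) = S := by
    rw [hSdef]
    simp [Set.image_insert_eq, Set.image_singleton, hfa]
  -- the ℓ lifted trees
  have hliftpend : ∀ i : Fin ℓ, IsPendantSteinerTree (pathGraph n □ H) S ((T₀ i).map f) := by
    intro i
    obtain ⟨ht, hsub, hdeg⟩ := hpend i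
    refine ⟨myIsTree_of_iso (myCoe_map_iso f hf (T₀ i)) ht, ?_, ?_⟩
    · intro p hp
      rw [← hSimage] at hp
      obtain ⟨x, hx, rfl⟩ := hp
      exact ⟨x, hsub hx, rfl⟩
    · intro v hv
      obtain ⟨x, hx, rfl⟩ := hSmem' v hv
      rw [show ((u, x) : Fin n × V) = f x from rfl, myMap_neighborSet f hf,
        Set.ncard_image_of_injective _ hf]
      apply hdeg
      rcases hx with h | h | h <;> simp [h]
  have hdisj_ll : ∀ i j : Fin ℓ, i ≠ j →
      InternallyDisjoint (pathGraph n □ H) S ((T₀ i).map f) ((T₀ j).map f) := by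
    intro i j hij
    obtain ⟨he, hv⟩ := hdis i j hij
    constructor
    · rw [Set.eq_empty_iff_forall_notMem]
      refine fun e => Sym2.ind (fun p q he' => ?_) e
      obtain ⟨he1, he2⟩ := he'
      rw [Subgraph.mem_edgeSet] at he1 he2
      obtain ⟨x1, y1, h1, hx1, hy1⟩ := he1
      obtain ⟨x2, y2, h2, hx2, hy2⟩ := he2
      obtain rfl : x1 = x2 := hf (by rw [hx1, hx2])
      obtain rfl : y1 = y2 := hf (by rw [hy1, hy2])
      have hmm : s(x1, y1) ∈ (T₀ i).edgeSet ∩ (T₀ j).edgeSet := ⟨h1, h2⟩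
      rw [he] at hmm
      exact hmm
    · show f '' (T₀ i).verts ∩ f '' (T₀ j).verts = S
      rw [← Set.image_inter hf, hv, hSimage]
  -- the extra tree is pendant
  have hTexpend : IsPendantSteinerTree (pathGraph n □ H) S Tex := by
    refine ⟨hTextree, ?_, ?_⟩
    · intro p hp
      obtain ⟨x, hx, rfl⟩ := hSmem' p hp
      exact layerK_mem_left H u u' huu' a b c hx
    · intro v hv
      obtain ⟨x, hx, rfl⟩ := hSmem' v hv
      have hsub : Tex.neighborSet (u, x) ⊆ {((u', x) : Fin n × V)} := by
        intro w hw
        have hKw : K.Adj (u, x) w := hTexle.2 hw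
        rw [hKdef, layerK_adj_iff] at hKw
        rcases hKw with ⟨_, hq1, hq2, _⟩ | ⟨_, hp1, _, _⟩ | ⟨hp1, _, _⟩
        · obtain ⟨w1, w2⟩ := w
          exact Set.mem_singleton_iff.mpr (Prod.ext hq1 hq2.symm)
        · exact absurd hp1 hune
        · exact absurd hp1 hune
      have h1 : ((u, x) : Fin n × V) ∈ Tex.verts := layerK_mem_left H u u' huu' a b c hx
      have h2 : ((u', x) : Fin n × V) ∈ Tex.verts := layerK_mem_right H u u' huu' a b c x
      have hnee : (⟨(u, x), h1⟩ : Tex.verts) ≠ ⟨(u', x), h2⟩ := by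
        intro hcc
        exact hune (congrArg (fun z => (Subtype.val z).1) hcc)
      obtain ⟨z, hz⟩ := myExists_adj_of_reachable_ne (hTextree.1.preconnected _ _) hnee
      have hnonempty : (Tex.neighborSet (u, x)).Nonempty := ⟨z.val, hz⟩
      rw [(Set.Nonempty.subset_singleton_iff hnonempty).mp hsub, Set.ncard_singleton]
  -- lifted trees vs extra tree
  have hdisj_lx : ∀ i : Fin ℓ,
      InternallyDisjoint (pathGraph n □ H) S ((T₀ i).map f) Tex := by
    intro i
    constructor
    · rw [Set.eq_empty_iff_forall_notMem]
      refine fun e => Sym2.ind (fun p q he' => ?_) e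
      obtain ⟨he1, he2⟩ := he'
      rw [Subgraph.mem_edgeSet] at he1 he2
      obtain ⟨x1, y1, h1, hx1, hy1⟩ := he1
      have hKw : K.Adj p q := hTexle.2 he2
      rw [hKdef, layerK_adj_iff] at hKw
      have hp1 : p.1 = u := by rw [← hx1]; rfl
      have hq1 : q.1 = u := by rw [← hy1]; rfl
      rcases hKw with ⟨_, h', _, _⟩ | ⟨_, h', _, _⟩ | ⟨h', _, _⟩
      · exact hune (hq1.symm.trans h')
      · exact hune (hp1.symm.trans h')
      · exact hune (hp1.symm.trans h')
    · apply Set.Subset.antisymm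
      · rintro p ⟨⟨w, hw, rfl⟩, hpK⟩
        rcases hpK with hp | hp
        · rw [hSdef]; exact hp
        · exact absurd hp hune
      · intro p hp
        obtain ⟨x, hx, rfl⟩ := hSmem' p hp
        refine ⟨⟨x, (hpend i).2.1 ?_, rfl⟩, layerK_mem_left H u u' huu' a b c hx⟩
        rcases hx with h | h | h <;> simp [h]
  -- assemble
  refine ⟨fun i => if h : (i : ℕ) < ℓ then (T₀ ⟨i, h⟩).map f else Tex, ?_, ?_⟩
  · intro i
    by_cases h : (i : ℕ) < ℓ
    · simp only [dif_pos h]; exact hliftpend ⟨i, h⟩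
    · simp only [dif_neg h]; exact hTexpend
  · intro i j hij
    by_cases hi : (i : ℕ) < ℓ <;> by_cases hj : (j : ℕ) < ℓ
    · simp only [dif_pos hi, dif_pos hj]
      refine hdisj_ll ⟨i, hi⟩ ⟨j, hj⟩ (fun hcc => hij ?_)
      have : (⟨(i : ℕ), hi⟩ : Fin ℓ).val = (⟨(j : ℕ), hj⟩ : Fin ℓ).val := congrArg Fin.val hcc
      exact Fin.ext this
    · simp only [dif_pos hi, dif_neg hj]; exact hdisj_lx ⟨i, hi⟩
    · simp only [dif_neg hi, dif_pos hj]
      obtain ⟨he, hv⟩ := hdisj_lx ⟨j, hj⟩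
      exact ⟨by rw [Set.inter_comm]; exact he, by rw [Set.inter_comm]; exact hv⟩
    · exfalso
      have hi' := i.isLt
      have hj' := j.isLt
      exact hij (Fin.ext (by omega))
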